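/- Let n > 1 be a positive integer with F_n = D_n such that n + 1 is prime. Then for every nonnegative integer k, the integer n(n+1)^k satisfies F_{n(n+1)^k} = D_{n(n+1)^k}. -/

import Mathlib

/-- The map `f` from the paper: `f n = n - 1` if `n` is prime, and otherwise
`f n = n - d n` where `d n = n / n.minFac` is the largest divisor `d` of `n`
with `1 < d < n`. -/
def egf (n : ℕ) : ℕ := if n.Prime then n - 1 else n - n / n.minFac

/-- `F n = {n, f n, f (f n), …, 1}`: the set of iterates of `f` starting at `n`
(the iterates strictly decrease to `1`; we collect all positive iterates). -/
def Fset (n : ℕ) : Set ℕ := {m | 0 < m ∧ ∃ i : ℕ, egf^[i] n = m}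

/-- The sum `∑_{p^k ∣ n} 1/p^k` over all prime power divisors `p^k` of `n`. -/
def ppSum (n : ℕ) : ℚ := ∑ d ∈ n.divisors.filter (fun d => IsPrimePow d), (1 : ℚ) / d

/-- A prime power pseudoperfect number: `n > 1` with `∑_{p^k ∣ n} 1/p^k + 1/n = 1`. -/
def PPPseudoperfect (n : ℕ) : Prop := 1 < n ∧ ppSum n + 1 / n = 1

/-- A prime power Giuga number: a composite `n` with `∑_{p^k ∣ n} 1/p^k - 1/n` a positive integer. -/
def PPGiuga (n : ℕ) : Prop :=
  1 < n ∧ ¬ n.Prime ∧ ∃ m : ℕ, 0 < m ∧ ppSum n - 1 / n = m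

/-- A primary pseudoperfect number: `n > 1` with `∑_{p ∣ n} 1/p + 1/n = 1`. -/
def PrimaryPseudoperfect (n : ℕ) : Prop :=
  1 < n ∧ (∑ p ∈ n.primeFactors, (1 : ℚ) / p) + 1 / n = 1

/-- A Giuga number: a composite `n` with `∑_{p ∣ n} 1/p - 1/n` a positive integer. -/
def Giuga (n : ℕ) : Prop :=
  1 < n ∧ ¬ n.Prime ∧ ∃ m : ℕ, 0 < m ∧ (∑ p ∈ n.primeFactors, (1 : ℚ) / p) - 1 / n = m

/-- A pseudoperfect number: a positive integer that is the sum of a nonempty set of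
distinct divisors `d` with `0 < d < n`. -/
def Pseudoperfect (n : ℕ) : Prop :=
  0 < n ∧ ∃ s : Finset ℕ, s ⊆ n.properDivisors ∧ s.Nonempty ∧ ∑ d ∈ s, d = n

/-- if `n > 1` satisfies `F n = D n` and `n + 1` is prime, then for every
`k ≥ 0`, `F (n*(n+1)^k) = D (n*(n+1)^k)`. -/
lemma egf_eq (m : ℕ) : egf m = m - m / m.minFac := by
  unfold egf
  split
  · next hp => rw [hp.minFac_eq, Nat.div_self hp.pos]
  · rfl

lemma egf_lt {m : ℕ} (hm : 1 < m) : egf m < m := by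
  rw [egf_eq]
  exact Nat.sub_lt (by omega) (Nat.div_pos (Nat.minFac_le (by omega)) (Nat.minFac_pos m))

lemma egf_pos {m : ℕ} (hm : 1 < m) : 0 < egf m := by
  rw [egf_eq]
  have h2 : 2 ≤ m.minFac := (Nat.minFac_prime (by omega)).two_le
  have := Nat.div_lt_self (by omega : 0 < m) (by omega : 1 < m.minFac)
  omega

lemma Fset_insert {a : ℕ} (ha : 0 < a) : Fset a = insert a (Fset (egf a)) := by
  ext m
  simp only [Fset, Set.mem_setOf_eq, Set.mem_insert_iff]
  constructor
  · rintro ⟨hm, i, rfl⟩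
    cases i with
    | zero => left; rfl
    | succ i => right; exact ⟨hm, i, (Function.iterate_succ_apply egf i a).symm⟩
  · rintro (rfl | ⟨hm, i, rfl⟩)
    · exact ⟨ha, 0, rfl⟩
    · exact ⟨hm, i + 1, Function.iterate_succ_apply egf i a⟩

lemma Fset_one : Fset 1 = {1} := by
  have h0 : egf 1 = 0 := by simp [egf_eq]
  have h00 : egf 0 = 0 := by decide
  have hz : ∀ i, egf^[i] 0 = 0 := by
    intro i; induction i with
    | zero => rfl
    | succ i ih => rw [Function.iterate_succ_apply, h00, ih]
  ext m
  simp only [Fset, Set.mem_setOf_eq, Set.mem_singleton_iff]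
  constructor
  · rintro ⟨hm, i, rfl⟩
    cases i with
    | zero => rfl
    | succ i => rw [Function.iterate_succ_apply, h0, hz] at hm ⊢; omega
  · rintro rfl; exact ⟨one_pos, 0, rfl⟩

lemma minFac_mul_prime {a q : ℕ} (ha : 1 < a) (hq : q.Prime) (hle : a.minFac ≤ q) :
    (a * q).minFac = a.minFac := by
  have hp := Nat.minFac_prime (by omega : a ≠ 1)
  have haq : a * q ≠ 1 := by
    have := hq.two_le; nlinarith
  apply le_antisymm
  · exact Nat.minFac_le_of_dvd hp.two_le ((Nat.minFac_dvd a).mul_right q)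
  · have h2 : (a * q).minFac.Prime := Nat.minFac_prime haq
    rcases (Nat.Prime.dvd_mul h2).mp (Nat.minFac_dvd _) with hd | hd
    · exact Nat.minFac_le_of_dvd h2.two_le hd
    · have := (Nat.prime_dvd_prime_iff_eq h2 hq).mp hd
      omega

lemma egf_mul {a q : ℕ} (ha : 1 < a) (hq : q.Prime) (hle : a.minFac ≤ q) :
    egf (a * q) = egf a * q := by
  rw [egf_eq, egf_eq, minFac_mul_prime ha hq hle]
  rw [Nat.sub_mul]
  congr 1
  rw [mul_comm a q, Nat.mul_div_assoc q (Nat.minFac_dvd a), mul_comm]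

lemma FsetMul {q : ℕ} (hq : q.Prime) :
    ∀ a, 0 < a → (∀ m ∈ Fset a, m.minFac ≤ q) →
      Fset (a * q) = (fun m => m * q) '' Fset a ∪ Fset (egf q) := by
  intro a
  induction a using Nat.strong_induction_on with
  | _ a IH =>
    intro ha hmf
    by_cases h1e : a = 1
    · subst h1e
      rw [one_mul, Fset_one, Fset_insert hq.pos, Set.image_singleton, one_mul,
        Set.singleton_union]
    · have h1 : 1 < a := by omega
      have hma : a.minFac ≤ q := hmf a ⟨ha, 0, rfl⟩
      have hepos := egf_pos h1
      have hsub : Fset (egf a) ⊆ Fset a := by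
        rw [Fset_insert ha]; exact Set.subset_insert _ _
      rw [Fset_insert (Nat.mul_pos (by omega) hq.pos), egf_mul h1 hq hma,
        IH (egf a) (egf_lt h1) hepos (fun m hm => hmf m (hsub hm))]
      rw [Fset_insert ha]
      rw [Set.image_insert_eq, Set.insert_union]

lemma div_split {n q : ℕ} (hn : 0 < n) (hq : q.Prime) (hnd : ¬ q ∣ n) (k : ℕ) :
    ((n * q ^ (k + 1)).divisors : Set ℕ) =
      (fun m => m * q) '' ((n * q ^ k).divisors : Set ℕ) ∪ (n.divisors : Set ℕ) := by
  have hq0 : q ≠ 0 := hq.pos.ne'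
  have hk0 : n * q ^ k ≠ 0 := by positivity
  have hk1 : n * q ^ (k + 1) ≠ 0 := by positivity
  have hrw : n * q ^ (k + 1) = n * q ^ k * q := by ring
  ext d
  simp only [Set.mem_union, Set.mem_image, Finset.mem_coe, Nat.mem_divisors]
  constructor
  · rintro ⟨hd, -⟩
    by_cases hqd : q ∣ d
    · obtain ⟨e, rfl⟩ := hqd
      left
      refine ⟨e, ⟨?_, hk0⟩, mul_comm e q⟩
      rw [hrw] at hd
      have : e * q ∣ n * q ^ k * q := by rwa [mul_comm q e] at hd
      exact (mul_dvd_mul_iff_right hq0).mp this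
    · right
      refine ⟨?_, hn.ne'⟩
      have hc : Nat.Coprime d (q ^ (k + 1)) :=
        Nat.Coprime.pow_right _ ((hq.coprime_iff_not_dvd.mpr hqd).symm)
      exact hc.dvd_of_dvd_mul_right hd
  · rintro (⟨e, ⟨he, -⟩, rfl⟩ | ⟨hd, -⟩)
    · exact ⟨by rw [hrw]; exact mul_dvd_mul he dvd_rfl, hk1⟩
    · exact ⟨hd.mul_right _, hk1⟩

theorem stmt6 (n : ℕ) (hn : 1 < n) (h : Fset n = (n.divisors : Set ℕ))
    (hp : (n + 1).Prime) (k : ℕ) :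
    Fset (n * (n + 1) ^ k) = ((n * (n + 1) ^ k).divisors : Set ℕ) := by
  have hegfq : egf (n + 1) = n := by
    rw [egf_eq, hp.minFac_eq, Nat.div_self hp.pos]; omega
  have hnd : ¬ (n + 1) ∣ n := fun hd => by have := Nat.le_of_dvd (by omega) hd; omega
  induction k with
  | zero => simpa using h
  | succ k ih =>
    have hpos : 0 < n * (n + 1) ^ k := by positivity
    have hmf : ∀ m ∈ Fset (n * (n + 1) ^ k), m.minFac ≤ n + 1 := by
      intro m hm
      rw [ih] at hm
      simp only [Finset.mem_coe, Nat.mem_divisors] at hm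
      obtain ⟨hmd, -⟩ := hm
      by_cases hm1 : m = 1
      · subst hm1; simp [Nat.minFac_one]
      · have hmp := Nat.minFac_prime hm1
        have : m.minFac ∣ n * (n + 1) ^ k := (Nat.minFac_dvd m).trans hmd
        rcases hmp.dvd_mul.mp this with hd | hd
        · have := Nat.le_of_dvd (by omega) hd; omega
        · exact Nat.le_of_eq ((Nat.prime_dvd_prime_iff_eq hmp hp).mp (hmp.dvd_of_dvd_pow hd))
    have hrw : n * (n + 1) ^ (k + 1) = n * (n + 1) ^ k * (n + 1) := by ring
    rw [hrw, FsetMul hp _ hpos hmf, hegfq, ih, h, ← hrw,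
      div_split (by omega) hp hnd k]
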